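/- Fix Δx, Δy > 0. The fourth-order reconstruction problem is under-determined by the face data alone: the set of vector fields D = (Dx, Dy) on [−1/2,1/2]², with Dx in the span of { φ_i(ξ)φ_j(η) : i+j ≤ 4, j ≤ 3 } with zero coefficients on φ₃(ξ)φ₁(η) and φ₂(ξ)φ₂(η), and Dy in the span of { φ_i(ξ)φ_j(η) : i+j ≤ 4, i ≤ 3 } with zero coefficients on φ₂(ξ)φ₂(η) and φ₁(ξ)φ₃(η), such that Dx(±1/2, η) ≡ 0, Dy(ξ, ±1/2) ≡ 0 and (1/Δx)∂_ξ Dx + (1/Δy)∂_η Dy ≡ 0, is a one-dimensional real vector space. -/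

import Mathlib

/-- The orthogonal basis polynomials on `[-1/2, 1/2]`. -/
noncomputable def phi : ℕ → ℝ → ℝ
  | 0, _ => 1
  | 1, x => x
  | 2, x => x ^ 2 - 1 / 12
  | 3, x => x ^ 3 - 3 / 20 * x
  | 4, x => x ^ 4 - 3 / 14 * x ^ 2 + 3 / 560
  | 5, x => x ^ 5 - 5 / 18 * x ^ 3 + 5 / 336 * x
  | _, _ => 0

lemma hasDerivAt_quartic (c0 c1 c2 c3 c4 x : ℝ) :
    HasDerivAt (fun t : ℝ => c0 + c1 * t + c2 * t ^ 2 + c3 * t ^ 3 + c4 * t ^ 4)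
      (c1 + 2 * c2 * x + 3 * c3 * x ^ 2 + 4 * c4 * x ^ 3) x := by
  have h1 : HasDerivAt (fun t : ℝ => t) 1 x := hasDerivAt_id x
  have h := ((((hasDerivAt_const x c0).add (h1.const_mul c1)).add
      ((hasDerivAt_pow 2 x).const_mul c2)).add
      ((hasDerivAt_pow 3 x).const_mul c3)).add ((hasDerivAt_pow 4 x).const_mul c4)
  refine h.congr_deriv ?_
  norm_num
  ring

lemma deriv_quartic (c0 c1 c2 c3 c4 x : ℝ) :
    deriv (fun t : ℝ => c0 + c1 * t + c2 * t ^ 2 + c3 * t ^ 3 + c4 * t ^ 4) x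
      = c1 + 2 * c2 * x + 3 * c3 * x ^ 2 + 4 * c4 * x ^ 3 :=
  (hasDerivAt_quartic c0 c1 c2 c3 c4 x).deriv

noncomputable def vx : Fin 12 → (ℝ × ℝ → ℝ) :=
  ![fun p => phi 0 p.1 * phi 0 p.2, fun p => phi 1 p.1 * phi 0 p.2,
    fun p => phi 2 p.1 * phi 0 p.2, fun p => phi 3 p.1 * phi 0 p.2,
    fun p => phi 4 p.1 * phi 0 p.2, fun p => phi 0 p.1 * phi 1 p.2,
    fun p => phi 1 p.1 * phi 1 p.2, fun p => phi 2 p.1 * phi 1 p.2,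
    fun p => phi 0 p.1 * phi 2 p.2, fun p => phi 1 p.1 * phi 2 p.2,
    fun p => phi 0 p.1 * phi 3 p.2, fun p => phi 1 p.1 * phi 3 p.2]

noncomputable def vy : Fin 12 → (ℝ × ℝ → ℝ) :=
  ![fun p => phi 0 p.1 * phi 0 p.2, fun p => phi 0 p.1 * phi 1 p.2,
    fun p => phi 0 p.1 * phi 2 p.2, fun p => phi 0 p.1 * phi 3 p.2,
    fun p => phi 0 p.1 * phi 4 p.2, fun p => phi 1 p.1 * phi 0 p.2,
    fun p => phi 1 p.1 * phi 1 p.2, fun p => phi 1 p.1 * phi 2 p.2,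
    fun p => phi 2 p.1 * phi 0 p.2, fun p => phi 2 p.1 * phi 1 p.2,
    fun p => phi 3 p.1 * phi 0 p.2, fun p => phi 3 p.1 * phi 1 p.2]

lemma sub_vx : {f : ℝ × ℝ → ℝ | ∃ i j : ℕ, i + j ≤ 4 ∧ j ≤ 3 ∧
    ¬(i = 3 ∧ j = 1) ∧ ¬(i = 2 ∧ j = 2) ∧ f = fun p => phi i p.1 * phi j p.2}
    ⊆ Set.range vx := by
  rintro f ⟨i, j, hij, hj, h31, h22, rfl⟩
  have hi : i ≤ 4 := by omega
  interval_cases j <;> interval_cases i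
  · exact ⟨0, rfl⟩
  · exact ⟨1, rfl⟩
  · exact ⟨2, rfl⟩
  · exact ⟨3, rfl⟩
  · exact ⟨4, rfl⟩
  · exact ⟨5, rfl⟩
  · exact ⟨6, rfl⟩
  · exact ⟨7, rfl⟩
  · exact absurd ⟨rfl, rfl⟩ h31
  · omega
  · exact ⟨8, rfl⟩
  · exact ⟨9, rfl⟩
  · exact absurd ⟨rfl, rfl⟩ h22
  · omega
  · omega
  · exact ⟨10, rfl⟩
  · exact ⟨11, rfl⟩
  · omega
  · omega
  · omega

lemma sub_vy : {f : ℝ × ℝ → ℝ | ∃ i j : ℕ, i + j ≤ 4 ∧ i ≤ 3 ∧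
    ¬(i = 2 ∧ j = 2) ∧ ¬(i = 1 ∧ j = 3) ∧ f = fun p => phi i p.1 * phi j p.2}
    ⊆ Set.range vy := by
  rintro f ⟨i, j, hij, hi, h22, h13, rfl⟩
  have hj : j ≤ 4 := by omega
  interval_cases i <;> interval_cases j
  · exact ⟨0, rfl⟩
  · exact ⟨1, rfl⟩
  · exact ⟨2, rfl⟩
  · exact ⟨3, rfl⟩
  · exact ⟨4, rfl⟩
  · exact ⟨5, rfl⟩
  · exact ⟨6, rfl⟩
  · exact ⟨7, rfl⟩
  · exact absurd ⟨rfl, rfl⟩ h13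
  · omega
  · exact ⟨8, rfl⟩
  · exact ⟨9, rfl⟩
  · exact absurd ⟨rfl, rfl⟩ h22
  · omega
  · omega
  · exact ⟨10, rfl⟩
  · exact ⟨11, rfl⟩
  · omega
  · omega
  · omega

lemma repx (g : ℝ × ℝ → ℝ)
    (hg : g ∈ Submodule.span ℝ {f : ℝ × ℝ → ℝ | ∃ i j : ℕ, i + j ≤ 4 ∧ j ≤ 3 ∧
      ¬(i = 3 ∧ j = 1) ∧ ¬(i = 2 ∧ j = 2) ∧ f = fun p => phi i p.1 * phi j p.2}) :
    ∃ a : Fin 12 → ℝ, ∀ x y : ℝ, g (x, y) =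
      a 0 + a 1 * x + a 2 * (x^2 - 1/12) + a 3 * (x^3 - 3/20*x)
      + a 4 * (x^4 - 3/14*x^2 + 3/560)
      + a 5 * y + a 6 * (x*y) + a 7 * ((x^2-1/12)*y)
      + a 8 * (y^2-1/12) + a 9 * (x*(y^2-1/12))
      + a 10 * (y^3-3/20*y) + a 11 * (x*(y^3-3/20*y)) := by
  have hg' := Submodule.span_mono sub_vx hg
  obtain ⟨a, ha⟩ := (Submodule.mem_span_range_iff_exists_fun ℝ).mp hg'
  refine ⟨a, fun x y => ?_⟩
  rw [← ha]
  simp [vx, Fin.sum_univ_succ, phi,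
    show (Fin.succ 2 : Fin 12) = 3 from rfl,
    show ((Fin.succ 2).succ : Fin 12) = 4 from rfl,
    show ((Fin.succ 2).succ.succ : Fin 12) = 5 from rfl,
    show ((Fin.succ 2).succ.succ.succ : Fin 12) = 6 from rfl,
    show ((Fin.succ 2).succ.succ.succ.succ : Fin 12) = 7 from rfl,
    show ((Fin.succ 2).succ.succ.succ.succ.succ : Fin 12) = 8 from rfl,
    show ((Fin.succ 2).succ.succ.succ.succ.succ.succ : Fin 12) = 9 from rfl,
    show ((Fin.succ 2).succ.succ.succ.succ.succ.succ.succ : Fin 12) = 10 from rfl,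
    show ((Fin.succ 2).succ.succ.succ.succ.succ.succ.succ.succ : Fin 12) = 11 from rfl]
  ring

lemma repy (g : ℝ × ℝ → ℝ)
    (hg : g ∈ Submodule.span ℝ {f : ℝ × ℝ → ℝ | ∃ i j : ℕ, i + j ≤ 4 ∧ i ≤ 3 ∧
      ¬(i = 2 ∧ j = 2) ∧ ¬(i = 1 ∧ j = 3) ∧ f = fun p => phi i p.1 * phi j p.2}) :
    ∃ b : Fin 12 → ℝ, ∀ x y : ℝ, g (x, y) =
      b 0 + b 1 * y + b 2 * (y^2 - 1/12) + b 3 * (y^3 - 3/20*y)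
      + b 4 * (y^4 - 3/14*y^2 + 3/560)
      + b 5 * x + b 6 * (x*y) + b 7 * (x*(y^2-1/12))
      + b 8 * (x^2-1/12) + b 9 * ((x^2-1/12)*y)
      + b 10 * (x^3-3/20*x) + b 11 * ((x^3-3/20*x)*y) := by
  have hg' := Submodule.span_mono sub_vy hg
  obtain ⟨b, hb⟩ := (Submodule.mem_span_range_iff_exists_fun ℝ).mp hg'
  refine ⟨b, fun x y => ?_⟩
  rw [← hb]
  simp [vy, Fin.sum_univ_succ, phi,
    show (Fin.succ 2 : Fin 12) = 3 from rfl,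
    show ((Fin.succ 2).succ : Fin 12) = 4 from rfl,
    show ((Fin.succ 2).succ.succ : Fin 12) = 5 from rfl,
    show ((Fin.succ 2).succ.succ.succ : Fin 12) = 6 from rfl,
    show ((Fin.succ 2).succ.succ.succ.succ : Fin 12) = 7 from rfl,
    show ((Fin.succ 2).succ.succ.succ.succ.succ : Fin 12) = 8 from rfl,
    show ((Fin.succ 2).succ.succ.succ.succ.succ.succ : Fin 12) = 9 from rfl,
    show ((Fin.succ 2).succ.succ.succ.succ.succ.succ.succ : Fin 12) = 10 from rfl,
    show ((Fin.succ 2).succ.succ.succ.succ.succ.succ.succ.succ : Fin 12) = 11 from rfl]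
  ring

set_option maxHeartbeats 2000000 in
/-- The fourth-order reconstruction problem is under-determined by the
face data alone: the space of BDFM-type fields with vanishing face traces and vanishing
physical divergence is a one-dimensional real vector space. -/
theorem fourth_order_reconstruction_kernel_one_dimensional
    (Δx Δy : ℝ) (hΔx : 0 < Δx) (hΔy : 0 < Δy) :
    ∃ D₀ : (ℝ × ℝ → ℝ) × (ℝ × ℝ → ℝ), D₀ ≠ 0 ∧
      {D : (ℝ × ℝ → ℝ) × (ℝ × ℝ → ℝ) |
        D.1 ∈ Submodule.span ℝ {f : ℝ × ℝ → ℝ | ∃ i j : ℕ, i + j ≤ 4 ∧ j ≤ 3 ∧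
            ¬(i = 3 ∧ j = 1) ∧ ¬(i = 2 ∧ j = 2) ∧ f = fun p => phi i p.1 * phi j p.2} ∧
        D.2 ∈ Submodule.span ℝ {f : ℝ × ℝ → ℝ | ∃ i j : ℕ, i + j ≤ 4 ∧ i ≤ 3 ∧
            ¬(i = 2 ∧ j = 2) ∧ ¬(i = 1 ∧ j = 3) ∧ f = fun p => phi i p.1 * phi j p.2} ∧
        (∀ η ∈ Set.Icc (-(1:ℝ)/2) (1/2), D.1 (1/2, η) = 0) ∧
        (∀ η ∈ Set.Icc (-(1:ℝ)/2) (1/2), D.1 (-(1/2), η) = 0) ∧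
        (∀ ξ ∈ Set.Icc (-(1:ℝ)/2) (1/2), D.2 (ξ, 1/2) = 0) ∧
        (∀ ξ ∈ Set.Icc (-(1:ℝ)/2) (1/2), D.2 (ξ, -(1/2)) = 0) ∧
        (∀ p ∈ (Set.Icc (-(1:ℝ)/2) (1/2)) ×ˢ (Set.Icc (-(1:ℝ)/2) (1/2)),
          (1 / Δx) * deriv (fun ξ => D.1 (ξ, p.2)) p.1
            + (1 / Δy) * deriv (fun η => D.2 (p.1, η)) p.2 = 0)}
      = Set.range (fun c : ℝ => c • D₀) := by
  refine ⟨((fun p : ℝ × ℝ => (p.1 ^ 2 - 1/4) * p.2),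
          (fun p : ℝ × ℝ => -(Δy/Δx) * ((p.2 ^ 2 - 1/4) * p.1))), ?_, ?_⟩
  · intro h
    have h1 := congrFun (congrArg Prod.fst h) ((0:ℝ), (1:ℝ))
    norm_num at h1
  apply Set.Subset.antisymm
  · rintro D ⟨hsx, hsy, ht1, ht2, ht3, ht4, hdv⟩
    obtain ⟨a, hA⟩ := repx D.1 hsx
    obtain ⟨b, hB⟩ := repy D.2 hsy
    have m1 : ((1:ℝ)/2) ∈ Set.Icc (-(1:ℝ)/2) (1/2) := by norm_num
    have m2 : (-(1:ℝ)/2) ∈ Set.Icc (-(1:ℝ)/2) (1/2) := by norm_num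
    have m3 : ((1:ℝ)/4) ∈ Set.Icc (-(1:ℝ)/2) (1/2) := by norm_num
    have m4 : (-(1:ℝ)/4) ∈ Set.Icc (-(1:ℝ)/2) (1/2) := by norm_num
    have m0 : ((0:ℝ)) ∈ Set.Icc (-(1:ℝ)/2) (1/2) := by norm_num
    -- trace samples for D.1
    have tx1 := ht1 _ m1; rw [hA] at tx1; norm_num at tx1
    have tx2 := ht1 _ m2; rw [hA] at tx2; norm_num at tx2
    have tx3 := ht1 _ m3; rw [hA] at tx3; norm_num at tx3
    have tx4 := ht1 _ m4; rw [hA] at tx4; norm_num at tx4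
    have tx5 := ht2 _ m1; rw [hA] at tx5; norm_num at tx5
    have tx6 := ht2 _ m2; rw [hA] at tx6; norm_num at tx6
    have tx7 := ht2 _ m3; rw [hA] at tx7; norm_num at tx7
    have tx8 := ht2 _ m4; rw [hA] at tx8; norm_num at tx8
    -- trace samples for D.2
    have ty1 := ht3 _ m1; rw [hB] at ty1; norm_num at ty1
    have ty2 := ht3 _ m2; rw [hB] at ty2; norm_num at ty2
    have ty3 := ht3 _ m3; rw [hB] at ty3; norm_num at ty3
    have ty4 := ht3 _ m4; rw [hB] at ty4; norm_num at ty4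
    have ty5 := ht4 _ m1; rw [hB] at ty5; norm_num at ty5
    have ty6 := ht4 _ m2; rw [hB] at ty6; norm_num at ty6
    have ty7 := ht4 _ m3; rw [hB] at ty7; norm_num at ty7
    have ty8 := ht4 _ m4; rw [hB] at ty8; norm_num at ty8
    -- structural facts from the traces
    have ha8 : a 8 = 0 := by linarith only [tx1, tx2, tx3, tx4, tx5, tx6, tx7, tx8]
    have ha9 : a 9 = 0 := by linarith only [tx1, tx2, tx3, tx4, tx5, tx6, tx7, tx8]
    have ha10 : a 10 = 0 := by linarith only [tx1, tx2, tx3, tx4, tx5, tx6, tx7, tx8]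
    have ha11 : a 11 = 0 := by linarith only [tx1, tx2, tx3, tx4, tx5, tx6, tx7, tx8]
    have ha6 : a 6 = 0 := by linarith only [tx1, tx2, tx3, tx4, tx5, tx6, tx7, tx8]
    have ha5 : a 5 = -(a 7) / 6 := by linarith only [tx1, tx2, tx3, tx4, tx5, tx6, tx7, tx8]
    have hA13 : a 1 + a 3 / 10 = 0 := by linarith only [tx1, tx2, tx3, tx4, tx5, tx6, tx7, tx8]
    have hA024 : a 0 + a 2 / 6 + a 4 / 70 = 0 := by
      linarith only [tx1, tx2, tx3, tx4, tx5, tx6, tx7, tx8]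
    have hb8 : b 8 = 0 := by linarith only [ty1, ty2, ty3, ty4, ty5, ty6, ty7, ty8]
    have hb9 : b 9 = 0 := by linarith only [ty1, ty2, ty3, ty4, ty5, ty6, ty7, ty8]
    have hb10 : b 10 = 0 := by linarith only [ty1, ty2, ty3, ty4, ty5, ty6, ty7, ty8]
    have hb11 : b 11 = 0 := by linarith only [ty1, ty2, ty3, ty4, ty5, ty6, ty7, ty8]
    have hb6 : b 6 = 0 := by linarith only [ty1, ty2, ty3, ty4, ty5, ty6, ty7, ty8]
    have hb5 : b 5 = -(b 7) / 6 := by linarith only [ty1, ty2, ty3, ty4, ty5, ty6, ty7, ty8]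
    have hB13 : b 1 + b 3 / 10 = 0 := by linarith only [ty1, ty2, ty3, ty4, ty5, ty6, ty7, ty8]
    have hB024 : b 0 + b 2 / 6 + b 4 / 70 = 0 := by
      linarith only [ty1, ty2, ty3, ty4, ty5, ty6, ty7, ty8]
    -- divergence samples
    have hdv' : ∀ x ∈ Set.Icc (-(1:ℝ)/2) (1/2), ∀ y ∈ Set.Icc (-(1:ℝ)/2) (1/2),
        (1 / Δx) * deriv (fun ξ => D.1 (ξ, y)) x
          + (1 / Δy) * deriv (fun η => D.2 (x, η)) y = 0 :=
      fun x hx y hy => hdv (x, y) ⟨hx, hy⟩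
    have hfX : ∀ y : ℝ, (fun ξ : ℝ => D.1 (ξ, y)) = fun ξ : ℝ =>
        (a 0 - a 2/12 + 3*a 4/560 - (a 7/6 + a 7/12) * y) + (a 1 - 3*a 3/20) * ξ
          + (a 2 - 3*a 4/14 + a 7 * y) * ξ ^ 2 + a 3 * ξ ^ 3 + a 4 * ξ ^ 4 := by
      intro y; funext ξ
      rw [hA, ha5, ha6, ha8, ha9, ha10, ha11]; ring
    have hfY : ∀ x : ℝ, (fun η : ℝ => D.2 (x, η)) = fun η : ℝ =>
        (b 0 - b 2/12 + 3*b 4/560 - (b 7/6 + b 7/12) * x) + (b 1 - 3*b 3/20) * η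
          + (b 2 - 3*b 4/14 + b 7 * x) * η ^ 2 + b 3 * η ^ 3 + b 4 * η ^ 4 := by
      intro x; funext η
      rw [hB, hb5, hb6, hb8, hb9, hb10, hb11]; ring
    have E1 := hdv' _ m0 _ m0
    rw [hfX, hfY, deriv_quartic, deriv_quartic] at E1; ring_nf at E1
    have E2 := hdv' _ m1 _ m0
    rw [hfX, hfY, deriv_quartic, deriv_quartic] at E2; ring_nf at E2
    have E3 := hdv' _ m2 _ m0
    rw [hfX, hfY, deriv_quartic, deriv_quartic] at E3; ring_nf at E3
    have E4 := hdv' _ m3 _ m0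
    rw [hfX, hfY, deriv_quartic, deriv_quartic] at E4; ring_nf at E4
    have E5 := hdv' _ m0 _ m1
    rw [hfX, hfY, deriv_quartic, deriv_quartic] at E5; ring_nf at E5
    have E6 := hdv' _ m0 _ m2
    rw [hfX, hfY, deriv_quartic, deriv_quartic] at E6; ring_nf at E6
    have E7 := hdv' _ m0 _ m3
    rw [hfX, hfY, deriv_quartic, deriv_quartic] at E7; ring_nf at E7
    have E8 := hdv' _ m1 _ m1
    rw [hfX, hfY, deriv_quartic, deriv_quartic] at E8; ring_nf at E8
    have hxne : Δx ≠ 0 := hΔx.ne'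
    have hyne : Δy ≠ 0 := hΔy.ne'
    have hu4 : Δx⁻¹ * a 4 = 0 := by
      linarith only [E1, E2, E3, E4]
    have ha4 : a 4 = 0 := by field_simp at hu4; simpa using hu4
    have hu3 : Δx⁻¹ * a 3 = 0 := by
      linarith only [E1, E2, E3, E4]
    have ha3 : a 3 = 0 := by field_simp at hu3; simpa using hu3
    have hu2 : Δx⁻¹ * a 2 = 0 := by
      linarith only [E1, E2, E3, E4]
    have ha2 : a 2 = 0 := by field_simp at hu2; simpa using hu2
    have hw4 : Δy⁻¹ * b 4 = 0 := by
      linarith only [E1, E5, E6, E7]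
    have hb4 : b 4 = 0 := by field_simp at hw4; simpa using hw4
    have hw3 : Δy⁻¹ * b 3 = 0 := by
      linarith only [E1, E5, E6, E7]
    have hb3 : b 3 = 0 := by field_simp at hw3; simpa using hw3
    have hw2 : Δy⁻¹ * b 2 = 0 := by
      linarith only [E1, E5, E6, E7]
    have hb2 : b 2 = 0 := by field_simp at hw2; simpa using hw2
    have ha1 : a 1 = 0 := by linarith only [hA13, ha3]
    have hb1 : b 1 = 0 := by linarith only [hB13, hb3]
    have ha0 : a 0 = 0 := by linarith only [hA024, ha2, ha4]
    have hb0 : b 0 = 0 := by linarith only [hB024, hb2, hb4]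
    have hab7 : Δx⁻¹ * a 7 + Δy⁻¹ * b 7 = 0 := by
      linarith only [E1, E2, E3, E4, E5, E6, E7, E8]
    have hb7 : b 7 = -(Δy/Δx) * a 7 := by
      field_simp at hab7 ⊢
      linarith
    have hDx : ∀ x y : ℝ, D.1 (x, y) = a 7 * ((x ^ 2 - 1/4) * y) := by
      intro x y
      rw [hA, ha0, ha1, ha2, ha3, ha4, ha5, ha6, ha8, ha9, ha10, ha11]; ring
    have hDy : ∀ x y : ℝ, D.2 (x, y) = a 7 * (-(Δy/Δx) * ((y ^ 2 - 1/4) * x)) := by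
      intro x y
      rw [hB, hb0, hb1, hb2, hb3, hb4, hb5, hb6, hb8, hb9, hb10, hb11, hb7]; ring
    refine ⟨a 7, Prod.ext (funext fun q => ?_) (funext fun q => ?_)⟩
    · simp only [Prod.smul_fst, Pi.smul_apply, smul_eq_mul]
      exact (hDx q.1 q.2).symm
    · simp only [Prod.smul_snd, Pi.smul_apply, smul_eq_mul]
      exact (hDy q.1 q.2).symm
  · rintro D ⟨c, rfl⟩
    simp only [Set.mem_setOf_eq]
    have hfst : (c • (((fun p : ℝ × ℝ => (p.1 ^ 2 - 1/4) * p.2),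
        (fun p : ℝ × ℝ => -(Δy/Δx) * ((p.2 ^ 2 - 1/4) * p.1)))
          : (ℝ × ℝ → ℝ) × (ℝ × ℝ → ℝ))).1
        = fun p : ℝ × ℝ => c * ((p.1 ^ 2 - 1/4) * p.2) := by
      funext p; simp only [Prod.smul_fst, Pi.smul_apply, smul_eq_mul]
    have hsnd : (c • (((fun p : ℝ × ℝ => (p.1 ^ 2 - 1/4) * p.2),
        (fun p : ℝ × ℝ => -(Δy/Δx) * ((p.2 ^ 2 - 1/4) * p.1)))
          : (ℝ × ℝ → ℝ) × (ℝ × ℝ → ℝ))).2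
        = fun p : ℝ × ℝ => c * (-(Δy/Δx) * ((p.2 ^ 2 - 1/4) * p.1)) := by
      funext p; simp only [Prod.smul_snd, Pi.smul_apply, smul_eq_mul]
    rw [hfst, hsnd]
    refine ⟨?_, ?_, ?_, ?_, ?_, ?_, ?_⟩
    · have key : (fun p : ℝ × ℝ => c * ((p.1 ^ 2 - 1/4) * p.2))
          = c • (fun p : ℝ × ℝ => phi 2 p.1 * phi 1 p.2)
            + (-(c/6)) • (fun p : ℝ × ℝ => phi 0 p.1 * phi 1 p.2) := by
        funext p; simp [phi]; ring
      rw [key]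
      exact Submodule.add_mem _
        (Submodule.smul_mem _ _ (Submodule.subset_span
          ⟨2, 1, by norm_num, by norm_num, by omega, by omega, rfl⟩))
        (Submodule.smul_mem _ _ (Submodule.subset_span
          ⟨0, 1, by norm_num, by norm_num, by omega, by omega, rfl⟩))
    · have key : (fun p : ℝ × ℝ => c * (-(Δy/Δx) * ((p.2 ^ 2 - 1/4) * p.1)))
          = (-(c*Δy/Δx)) • (fun p : ℝ × ℝ => phi 1 p.1 * phi 2 p.2)
            + (c*Δy/(6*Δx)) • (fun p : ℝ × ℝ => phi 1 p.1 * phi 0 p.2) := by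
        funext p; simp [phi]; ring
      rw [key]
      exact Submodule.add_mem _
        (Submodule.smul_mem _ _ (Submodule.subset_span
          ⟨1, 2, by norm_num, by norm_num, by omega, by omega, rfl⟩))
        (Submodule.smul_mem _ _ (Submodule.subset_span
          ⟨1, 0, by norm_num, by norm_num, by omega, by omega, rfl⟩))
    · intro η hη; norm_num
    · intro η hη; norm_num
    · intro ξ hξ; norm_num
    · intro ξ hξ; norm_num
    · intro p hp
      have e1 : (fun ξ : ℝ => c * ((ξ ^ 2 - 1/4) * p.2))
          = fun ξ : ℝ => (-(c * p.2)/4) + 0 * ξ + (c * p.2) * ξ ^ 2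
              + 0 * ξ ^ 3 + 0 * ξ ^ 4 := by funext ξ; ring
      have e2 : (fun η : ℝ => c * (-(Δy/Δx) * ((η ^ 2 - 1/4) * p.1)))
          = fun η : ℝ => (-(c * (-(Δy/Δx)) * p.1)/4) + 0 * η
              + (c * (-(Δy/Δx)) * p.1) * η ^ 2 + 0 * η ^ 3 + 0 * η ^ 4 := by
        funext η; ring
      rw [e1, e2, deriv_quartic, deriv_quartic]
      field_simp
      ring
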